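/- Let (M, ≤) be a linear order and let D ⊆ M^k (k ≥ 1) be a set of k-tuples, ordered coordinatewise. Then D is an antichain in the product (coordinatewise) order if and only if for every index i, the set G_i = {(x_1,…,x_{i-1},x_{i+1},…,x_k, x_i) : (x_1,…,x_k) ∈ D} is the graph of a partial strictly decreasing function from M^{k-1} (with the coordinatewise order) to M. -/
import Mathlib


/-- In a linear order `M`, a set `D ⊆ M^k` (k ≥ 1) is an antichain in the
coordinatewise order iff for every index `i`, the set
`G_i = {(x₁,…,x_{i-1},x_{i+1},…,x_k, x_i) : x ∈ D}` is the graph of a partial strictly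
decreasing function from `M^{k-1}` (coordinatewise order) to `M`. -/
theorem stmt_0 {M : Type*} [LinearOrder M] {k : ℕ} (hk : 1 ≤ k) (D : Set (Fin k → M)) :
    IsAntichain (· ≤ ·) D ↔
      ∀ i : Fin k,
        (∀ x ∈ D, ∀ y ∈ D, (∀ j, j ≠ i → x j = y j) → x i = y i) ∧
        (∀ x ∈ D, ∀ y ∈ D, (∀ j, j ≠ i → x j ≤ y j) → (∃ j, j ≠ i ∧ x j ≠ y j) →
          y i < x i) := by
  constructor
  · intro hA i
    constructor
    · intro x hx y hy hxy
      by_contra hne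
      rcases lt_or_gt_of_ne hne with h | h
      · exact hA hx hy (fun hEq => hne (congrFun hEq i))
          (fun j => by rcases eq_or_ne j i with rfl | hj; exact h.le; exact (hxy j hj).le)
      · exact hA hy hx (fun hEq => hne (congrFun hEq i).symm)
          (fun j => by rcases eq_or_ne j i with rfl | hj; exact h.le; exact (hxy j hj).symm.le)
    · intro x hx y hy hle ⟨j, hj, hne⟩
      by_contra hlt
      push_neg at hlt
      exact hA hx hy (fun hEq => hne (congrFun hEq j))
        (fun l => by rcases eq_or_ne l i with rfl | hl; exact hlt; exact hle l hl)
  · intro h x hx y hy hne hle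
    obtain ⟨i, hi⟩ : ∃ i, x i ≠ y i := by
      by_contra hc; push_neg at hc; exact hne (funext hc)
    have hlt : x i < y i := lt_of_le_of_ne (hle i) hi
    by_cases hall : ∀ j, j ≠ i → x j = y j
    · exact hi ((h i).1 x hx y hy hall)
    · push_neg at hall
      obtain ⟨j, hj, hne'⟩ := hall
      exact absurd ((h i).2 x hx y hy (fun l _ => hle l) ⟨j, hj, hne'⟩) (not_lt.2 hlt.le)
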